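/- Let V : I → ℝ^N be a solution of the volume-scavenging system on an open interval I. Then for all t ∈ I, (d/dt) 𝒲(V(t)) = −(1/(2N)) Σ_{i,j=1}^N c_{i,j} |P(V_i(t)) − P(V_j(t))|^{s+1}. In particular, (d/dt) 𝒲(V(t)) ≤ 0 for all t ∈ I, and (d/dt) 𝒲(V(t₀)) = 0 at some t₀ ∈ I if and only if V(t₀) is an equilibrium of the system (i.e. the right-hand side of the system vanishes at V(t₀)). -/

import Mathlib

/-- Droplet volume as a function of height: v(h) = h(h²+3)/4. -/
noncomputable def vol (h : ℝ) : ℝ := h * (h ^ 2 + 3) / 4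

/-- Droplet pressure as a function of height: p(h) = 4h/(h²+1). -/
noncomputable def pres (h : ℝ) : ℝ := 4 * h / (h ^ 2 + 1)

/-- Pressure as a function of volume: P(V) = p(h) where v(h) = V
(v is a strictly increasing bijection of ℝ, so its inverse is well defined). -/
noncomputable def Pfun (V : ℝ) : ℝ := pres (Function.invFun vol V)

/-- Δ_s(x) = |x|^s sgn(x). -/
noncomputable def Ds (s x : ℝ) : ℝ := |x| ^ s * Real.sign x

/-- The energy functional 𝒲(V) = (1/N) Σ_j ∫_0^{V_j} P(u) du. -/
noncomputable def Wfun (N : ℕ) (V : Fin N → ℝ) : ℝ :=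
  (1 / (N : ℝ)) * ∑ j, ∫ u in (0 : ℝ)..(V j), Pfun u

lemma vol_strictMono : StrictMono vol := by
  have h1 : StrictMono fun h : ℝ => h ^ 3 + 3 * h :=
    (Odd.strictMono_pow (by decide : Odd 3)).add
      (strictMono_id.const_mul (by norm_num : (0:ℝ) < 3))
  have h2 : vol = fun h => (h ^ 3 + 3 * h) / 4 := by
    funext h; unfold vol; ring
  rw [h2]
  exact h1.div_const (by norm_num)

lemma vol_surj : Function.Surjective vol := by
  intro y
  have hc : Continuous vol := by unfold vol; continuity
  set a := min 0 (4 * y / 3) with ha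
  set b := max 0 (4 * y / 3) with hb
  have hab : a ≤ b := le_trans (min_le_left _ _) (le_max_left _ _)
  have h1 : vol a ≤ y := by
    have h0 : a ≤ 0 := min_le_left _ _
    have h1 : a ≤ 4 * y / 3 := min_le_right _ _
    unfold vol
    nlinarith [sq_nonneg a,
      mul_nonneg (mul_nonneg (neg_nonneg.mpr h0) (neg_nonneg.mpr h0)) (neg_nonneg.mpr h0)]
  have h2 : y ≤ vol b := by
    have h0 : 0 ≤ b := le_max_left _ _
    have h1 : 4 * y / 3 ≤ b := le_max_right _ _
    unfold vol
    nlinarith [mul_nonneg (mul_nonneg h0 h0) h0]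
  obtain ⟨x, _, hx⟩ := intermediate_value_Icc hab hc.continuousOn ⟨h1, h2⟩
  exact ⟨x, hx⟩

lemma invFun_vol_cont : Continuous (Function.invFun vol) := by
  let e := StrictMono.orderIsoOfSurjective vol vol_strictMono vol_surj
  have he : Function.invFun vol = e.symm := by
    funext x
    apply vol_strictMono.injective
    rw [Function.invFun_eq (vol_surj x)]
    have : vol (e.symm x) = e (e.symm x) := by
      rw [StrictMono.coe_orderIsoOfSurjective]
    rw [this, OrderIso.apply_symm_apply]
  rw [he]
  exact e.symm.continuous

lemma Pfun_cont : Continuous Pfun := by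
  have hp : Continuous pres := by
    unfold pres
    exact (continuous_const.mul continuous_id).div (by continuity)
      (fun x => by positivity)
  exact hp.comp invFun_vol_cont

lemma Ds_neg (s x : ℝ) : Ds s (-x) = - Ds s x := by
  unfold Ds
  rw [abs_neg, Real.sign_neg, mul_neg]

lemma Ds_zero (s : ℝ) : Ds s 0 = 0 := by
  unfold Ds; rw [Real.sign_zero, mul_zero]

lemma mul_Ds (s : ℝ) (hs : 0 < s) (x : ℝ) : x * Ds s x = |x| ^ (s + 1) := by
  rcases eq_or_ne x 0 with rfl | hx
  · rw [Ds_zero, mul_zero, abs_zero, Real.zero_rpow (by linarith)]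
  · have hax : (0:ℝ) < |x| := abs_pos.mpr hx
    have hsgn : x * Real.sign x = |x| := by
      rcases hx.lt_or_gt with h | h
      · rw [Real.sign_of_neg h, abs_of_neg h]; ring
      · rw [Real.sign_of_pos h, abs_of_pos h]; ring
    calc x * Ds s x = (x * Real.sign x) * |x| ^ s := by unfold Ds; ring
      _ = |x| ^ (1:ℝ) * |x| ^ s := by rw [hsgn, Real.rpow_one]
      _ = |x| ^ (s + 1) := by rw [← Real.rpow_add hax]; ring_nf

lemma key_ident (N : ℕ) (s : ℝ) (hs : 0 < s) (c : Fin N → Fin N → ℝ)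
    (hsymm : ∀ i j, c i j = c j i) (P : Fin N → ℝ) :
    ∑ j, P j * ∑ i, c i j * Ds s (P i - P j)
      = -(1/2) * ∑ i, ∑ j, c i j * |P i - P j| ^ (s + 1) := by
  set S := ∑ j, P j * ∑ i, c i j * Ds s (P i - P j) with hS
  have expand : S = ∑ j, ∑ i, P j * (c i j * Ds s (P i - P j)) := by
    rw [hS]; simp_rw [Finset.mul_sum]
  have hswap : S = ∑ j, ∑ i, -(c i j * (P i * Ds s (P i - P j))) := by
    rw [expand, Finset.sum_comm]
    refine Finset.sum_congr rfl fun j _ => Finset.sum_congr rfl fun i _ => ?_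
    rw [hsymm j i]
    have h1 : Ds s (P j - P i) = - Ds s (P i - P j) := by
      rw [show P j - P i = -(P i - P j) by ring, Ds_neg]
    rw [h1]; ring
  have h2 : S + S = ∑ j, ∑ i, -(c i j * |P i - P j| ^ (s + 1)) := by
    nth_rewrite 1 [expand]
    rw [hswap, ← Finset.sum_add_distrib]
    refine Finset.sum_congr rfl fun j _ => ?_
    rw [← Finset.sum_add_distrib]
    refine Finset.sum_congr rfl fun i _ => ?_
    have hmd := mul_Ds s hs (P i - P j)
    linear_combination (-(c i j)) * hmd
  have h3 : ∑ j, ∑ i, -(c i j * |P i - P j| ^ (s + 1))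
      = - ∑ i, ∑ j, c i j * |P i - P j| ^ (s + 1) := by
    rw [Finset.sum_comm]
    simp [Finset.sum_neg_distrib]
  rw [h3] at h2
  linarith

lemma hasDerivAt_int (x : ℝ) :
    HasDerivAt (fun y => ∫ u in (0:ℝ)..y, Pfun u) (Pfun x) x :=
  intervalIntegral.integral_hasDerivAt_right (Pfun_cont.intervalIntegrable 0 x)
    (Pfun_cont.stronglyMeasurableAtFilter _ _) Pfun_cont.continuousAt

theorem stmt9 (N : ℕ) (hN : 2 ≤ N) (s : ℝ) (hs : 0 < s)
    (c : Fin N → Fin N → ℝ)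
    (hsymm : ∀ i j, c i j = c j i)
    (hnonneg : ∀ i j, 0 ≤ c i j)
    (hdiag : ∀ i, c i i = 0)
    (hconn : (SimpleGraph.fromRel (fun i j => 0 < c i j)).Connected)
    (I : Set ℝ) (hIopen : IsOpen I) (hIord : I.OrdConnected)
    (V : ℝ → Fin N → ℝ)
    (hsol : ∀ t ∈ I, ∀ j, HasDerivAt (fun τ => V τ j)
      (∑ i, c i j * Ds s (Pfun (V t i) - Pfun (V t j))) t) :
    (∀ t ∈ I, HasDerivAt (fun τ => Wfun N (V τ))
      (-(1 / (2 * (N : ℝ))) *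
        ∑ i, ∑ j, c i j * |Pfun (V t i) - Pfun (V t j)| ^ (s + 1)) t) ∧
    (∀ t ∈ I,
      -(1 / (2 * (N : ℝ))) *
        ∑ i, ∑ j, c i j * |Pfun (V t i) - Pfun (V t j)| ^ (s + 1) ≤ 0) ∧
    (∀ t₀ ∈ I,
      (-(1 / (2 * (N : ℝ))) *
        ∑ i, ∑ j, c i j * |Pfun (V t₀ i) - Pfun (V t₀ j)| ^ (s + 1) = 0 ↔
        ∀ j, ∑ i, c i j * Ds s (Pfun (V t₀ i) - Pfun (V t₀ j)) = 0)) := by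
  have hNpos : (0:ℝ) < (N : ℝ) := by
    have : 0 < N := lt_of_lt_of_le two_pos hN
    exact_mod_cast this
  have hkey : ∀ t : ℝ,
      ∑ j, Pfun (V t j) * ∑ i, c i j * Ds s (Pfun (V t i) - Pfun (V t j))
        = -(1/2) * ∑ i, ∑ j, c i j * |Pfun (V t i) - Pfun (V t j)| ^ (s + 1) := by
    intro t
    have := key_ident N s hs c hsymm (fun j => Pfun (V t j))
    simpa using this
  have hTnonneg : ∀ t : ℝ,
      0 ≤ ∑ i, ∑ j, c i j * |Pfun (V t i) - Pfun (V t j)| ^ (s + 1) := by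
    intro t
    refine Finset.sum_nonneg fun i _ => Finset.sum_nonneg fun j _ => ?_
    exact mul_nonneg (hnonneg i j) (Real.rpow_nonneg (abs_nonneg _) _)
  refine ⟨?_, ?_, ?_⟩
  · intro t ht
    have hsum : HasDerivAt (fun τ => ∑ j, ∫ u in (0:ℝ)..(V τ j), Pfun u)
        (∑ j, Pfun (V t j) * ∑ i, c i j * Ds s (Pfun (V t i) - Pfun (V t j))) t := by
      apply HasDerivAt.fun_sum
      intro j _
      exact (hasDerivAt_int (V t j)).comp t (hsol t ht j)
    have hW : HasDerivAt (fun τ => Wfun N (V τ))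
        ((1 / (N:ℝ)) * ∑ j, Pfun (V t j) * ∑ i, c i j * Ds s (Pfun (V t i) - Pfun (V t j))) t := by
      unfold Wfun
      exact hsum.const_mul _
    have heq : (1 / (N:ℝ)) * ∑ j, Pfun (V t j) * ∑ i, c i j * Ds s (Pfun (V t i) - Pfun (V t j))
        = -(1 / (2 * (N : ℝ))) * ∑ i, ∑ j, c i j * |Pfun (V t i) - Pfun (V t j)| ^ (s + 1) := by
      rw [hkey t]
      ring
    rwa [heq] at hW
  · intro t ht
    have hcoef : -(1 / (2 * (N : ℝ))) ≤ 0 := by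
      have : 0 < 1 / (2 * (N:ℝ)) := by positivity
      linarith
    exact mul_nonpos_of_nonpos_of_nonneg hcoef (hTnonneg t)
  · intro t₀ _
    set T := ∑ i, ∑ j, c i j * |Pfun (V t₀ i) - Pfun (V t₀ j)| ^ (s + 1) with hT
    constructor
    · intro h0 j
      have hcoefne : -(1 / (2 * (N : ℝ))) ≠ 0 := by
        have : 0 < 1 / (2 * (N:ℝ)) := by positivity
        linarith
      have hT0 : T = 0 := by
        rcases mul_eq_zero.mp h0 with h | h
        · exact absurd h hcoefne
        · exact h
      have hterm : ∀ i j', c i j' * |Pfun (V t₀ i) - Pfun (V t₀ j')| ^ (s + 1) = 0 := by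
        intro i j'
        have houter := (Finset.sum_eq_zero_iff_of_nonneg
          (fun i _ => Finset.sum_nonneg fun j _ =>
            mul_nonneg (hnonneg i j) (Real.rpow_nonneg (abs_nonneg _) _))).mp hT0
        have hinner := (Finset.sum_eq_zero_iff_of_nonneg
          (fun j _ => mul_nonneg (hnonneg i j) (Real.rpow_nonneg (abs_nonneg _) _))).mp
          (houter i (Finset.mem_univ i))
        exact hinner j' (Finset.mem_univ j')
      refine Finset.sum_eq_zero fun i _ => ?_
      rcases mul_eq_zero.mp (hterm i j) with h | h
      · rw [h, zero_mul]
      · have habs : |Pfun (V t₀ i) - Pfun (V t₀ j)| = 0 := by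
          by_contra hne
          have hpos : 0 < |Pfun (V t₀ i) - Pfun (V t₀ j)| :=
            lt_of_le_of_ne (abs_nonneg _) (Ne.symm hne)
          exact absurd h (ne_of_gt (Real.rpow_pos_of_pos hpos _))
        have : Pfun (V t₀ i) - Pfun (V t₀ j) = 0 := abs_eq_zero.mp habs
        rw [this, Ds_zero, mul_zero]
    · intro hall
      have h0 : ∑ j, Pfun (V t₀ j) * ∑ i, c i j * Ds s (Pfun (V t₀ i) - Pfun (V t₀ j)) = 0 := by
        refine Finset.sum_eq_zero fun j _ => ?_
        rw [hall j, mul_zero]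
      rw [hkey t₀] at h0
      have hT0 : T = 0 := by
        rw [hT]
        linarith
      rw [hT0, mul_zero]
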